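/- For any nonzero x ∈ ℝ^N with all entries nonzero and positive weights w, min(x) > 0 implies ⊗^∧(w, x) > 0, and min(x) < 0 implies ⊗^∧(w, x) < 0 (soundness of the weighted conjunction robustness). -/

import Mathlib

noncomputable def otimes (N : ℕ) (hN : 0 < N) (w x : Fin N → ℝ) : ℝ :=
  Finset.univ.inf' ⟨⟨0, hN⟩, Finset.mem_univ _⟩
    (fun i => ((1 / 2 - w i / ∑ j, w j) * Real.sign (x i) + 1 / 2) * x i)

theorem otimes_soundness (N : ℕ) (hN : 2 ≤ N) (w x : Fin N → ℝ)
    (hw : ∀ i, 0 < w i) (hx : ∀ i, x i ≠ 0) :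
    (0 < Finset.univ.inf' ⟨⟨0, by omega⟩, Finset.mem_univ _⟩ x →
        0 < otimes N (by omega) w x) ∧
      (Finset.univ.inf' ⟨⟨0, by omega⟩, Finset.mem_univ _⟩ x < 0 →
        otimes N (by omega) w x < 0) := by
  have hsum : 0 < ∑ j, w j := Finset.sum_pos (fun i _ => hw i) ⟨⟨0, by omega⟩, Finset.mem_univ _⟩
  have hbar : ∀ i : Fin N, 0 < w i / ∑ j, w j ∧ w i / ∑ j, w j < 1 := by
    intro i
    constructor
    · exact div_pos (hw i) hsum
    · rw [div_lt_one hsum]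
      obtain ⟨j, hj⟩ : ∃ j : Fin N, j ≠ i := by
        by_cases h : i = ⟨0, by omega⟩
        · exact ⟨⟨1, by omega⟩, by simp [h, Fin.ext_iff]⟩
        · exact ⟨⟨0, by omega⟩, fun he => h he.symm⟩
      exact Finset.single_lt_sum hj (Finset.mem_univ i) (Finset.mem_univ j) (hw j)
        (fun k _ _ => (hw k).le)
  -- sign of each term
  have hterm : ∀ i : Fin N,
      (0 < x i → 0 < ((1 / 2 - w i / ∑ j, w j) * Real.sign (x i) + 1 / 2) * x i) ∧
      (x i < 0 → ((1 / 2 - w i / ∑ j, w j) * Real.sign (x i) + 1 / 2) * x i < 0) := by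
    intro i
    obtain ⟨h0, h1⟩ := hbar i
    constructor
    · intro hxi
      rw [Real.sign_of_pos hxi]
      nlinarith
    · intro hxi
      rw [Real.sign_of_neg hxi]
      nlinarith
  constructor
  · intro hmin
    rw [otimes]
    apply (Finset.lt_inf'_iff _).mpr
    intro i _
    exact (hterm i).1 ((Finset.lt_inf'_iff _).mp hmin i (Finset.mem_univ i))
  · intro hmin
    rw [otimes]
    replace hmin := (Finset.inf'_lt_iff _).mp hmin
    apply (Finset.inf'_lt_iff _).mpr
    rcases hmin with ⟨i, _, hxi⟩
    exact ⟨i, Finset.mem_univ i, (hterm i).2 hxi⟩
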